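/- Under the gated observation model, the expected information gain about y satisfies I(y; z) = P(S=1) · (H(y) - H(y | z, S=1)) whenever y ⊥ S, y ⊥ z given S=0, and z determines S. In particular if additionally H(y | z, S=1) = 0 (ideal observer), then I(y; z) = H(y) · P(S=1). -/

import Mathlib

open Real Classical

noncomputable section

variable {Ω : Type*} [Fintype Ω]

/-- Probability of an event under a pmf on a finite sample space. -/
def prob (μ : Ω → ℝ) (E : Ω → Prop) : ℝ :=
  ∑ ω, if E ω then μ ω else 0

/-- `μ` is a probability mass function on the finite sample space. -/
def IsPMF (μ : Ω → ℝ) : Prop :=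
  (∀ ω, 0 ≤ μ ω) ∧ ∑ ω, μ ω = 1

/-- Shannon entropy `H(X)` of a random variable `X`. -/
def ent {A : Type*} [Fintype A] (μ : Ω → ℝ) (X : Ω → A) : ℝ :=
  ∑ a, Real.negMulLog (prob μ fun ω => X ω = a)

/-- Conditional entropy `H(X | Y)`. -/
def condEnt {A B : Type*} [Fintype A] [Fintype B] (μ : Ω → ℝ) (X : Ω → A) (Y : Ω → B) : ℝ :=
  ent μ (fun ω => (X ω, Y ω)) - ent μ Y

/-- Mutual information `I(X ; Y) = H(X) - H(X | Y)`. -/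
def mutInfo {A B : Type*} [Fintype A] [Fintype B] (μ : Ω → ℝ) (X : Ω → A) (Y : Ω → B) : ℝ :=
  ent μ X - condEnt μ X Y

/-- Conditional mutual information `I(X ; Y | Z) = H(X | Z) - H(X | Y, Z)`. -/
def condMutInfo {A B C : Type*} [Fintype A] [Fintype B] [Fintype C]
    (μ : Ω → ℝ) (X : Ω → A) (Y : Ω → B) (Z : Ω → C) : ℝ :=
  condEnt μ X Z - condEnt μ X (fun ω => (Y ω, Z ω))

/-- The conditional measure given an event `E`. -/
def condMeas (μ : Ω → ℝ) (E : Ω → Prop) : Ω → ℝ :=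
  fun ω => if E ω then μ ω / prob μ E else 0

/-! ### Auxiliary lemmas -/

lemma prob_nonneg' (μ : Ω → ℝ) (hμ0 : ∀ ω, 0 ≤ μ ω) (E : Ω → Prop) : 0 ≤ prob μ E := by
  unfold prob
  apply Finset.sum_nonneg
  intro ω _
  split_ifs
  · exact hμ0 ω
  · exact le_refl 0

lemma prob_mono' (μ : Ω → ℝ) (hμ0 : ∀ ω, 0 ≤ μ ω) {E F : Ω → Prop}
    (h : ∀ ω, F ω → E ω) : prob μ F ≤ prob μ E := by
  unfold prob
  apply Finset.sum_le_sum
  intro ω _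
  by_cases hF : F ω
  · simp [hF, h ω hF]
  · simp only [hF, if_false]
    split_ifs
    · exact hμ0 ω
    · exact le_refl 0

lemma prob_congr' (μ : Ω → ℝ) {E F : Ω → Prop} (h : ∀ ω, E ω ↔ F ω) :
    prob μ E = prob μ F := by
  unfold prob
  exact Finset.sum_congr rfl fun ω _ => by simp [h ω]

lemma prob_condMeas' (μ : Ω → ℝ) (E F : Ω → Prop) :
    prob (condMeas μ E) F = prob μ (fun ω => F ω ∧ E ω) / prob μ E := by
  unfold prob condMeas
  rw [Finset.sum_div]
  apply Finset.sum_congr rfl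
  intro ω _
  by_cases hF : F ω <;> by_cases hE : E ω <;> simp [hF, hE, prob]

lemma sum_prob' {C : Type*} [Fintype C] (μ : Ω → ℝ) (X : Ω → C) :
    ∑ c, prob μ (fun ω => X ω = c) = ∑ ω, μ ω := by
  unfold prob
  rw [Finset.sum_comm]
  apply Finset.sum_congr rfl
  intro ω _
  simp

lemma sum_condMeas' (μ : Ω → ℝ) (E : Ω → Prop) (h : prob μ E ≠ 0) :
    ∑ ω, condMeas μ E ω = 1 := by
  have : ∑ ω, condMeas μ E ω = prob μ E / prob μ E := by
    unfold condMeas prob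
    rw [Finset.sum_div]
    apply Finset.sum_congr rfl
    intro ω _
    split_ifs <;> simp
  rw [this, div_self h]

lemma prob_split_bool' (μ : Ω → ℝ) (S : Ω → Bool) (E : Ω → Prop) :
    prob μ E
      = prob μ (fun ω => E ω ∧ S ω = true) + prob μ (fun ω => E ω ∧ S ω = false) := by
  unfold prob
  rw [← Finset.sum_add_distrib]
  apply Finset.sum_congr rfl
  intro ω _
  cases hS : S ω <;> by_cases hE : E ω <;> simp [hE, hS]

lemma negMulLog_add_lt' {u v : ℝ} (hu : 0 < u) (hv : 0 < v) :
    negMulLog (u + v) < negMulLog u + negMulLog v := by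
  have h1 : Real.log u < Real.log (u + v) := Real.log_lt_log hu (by linarith)
  have h2 : Real.log v < Real.log (u + v) := Real.log_lt_log hv (by linarith)
  simp only [negMulLog]
  nlinarith [mul_lt_mul_of_pos_left h1 hu, mul_lt_mul_of_pos_left h2 hv]

lemma negMulLog_add_le' {u v : ℝ} (hu : 0 ≤ u) (hv : 0 ≤ v) :
    negMulLog (u + v) ≤ negMulLog u + negMulLog v := by
  rcases hu.lt_or_eq with h | h
  · rcases hv.lt_or_eq with h' | h'
    · exact (negMulLog_add_lt' h h').le
    · simp [← h']
  · simp [← h]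

/-- If `H(S | z) = 0` then for every `b` at most one of the joint events has
positive probability. -/
lemma det_of_condEnt_zero' {B : Type*} [Fintype B] (μ : Ω → ℝ) (hμ : IsPMF μ)
    (S : Ω → Bool) (z : Ω → B) (hdet : condEnt μ S z = 0) (b : B) :
    prob μ (fun ω => z ω = b ∧ S ω = true) = 0
      ∨ prob μ (fun ω => z ω = b ∧ S ω = false) = 0 := by
  set u : B → ℝ := fun b => prob μ (fun ω => z ω = b ∧ S ω = true) with hu
  set v : B → ℝ := fun b => prob μ (fun ω => z ω = b ∧ S ω = false) with hv
  have hT : ∀ b, prob μ (fun ω => (S ω, z ω) = (true, b)) = u b := fun b =>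
    prob_congr' μ fun ω => by simp [Prod.ext_iff, and_comm]
  have hF : ∀ b, prob μ (fun ω => (S ω, z ω) = (false, b)) = v b := fun b =>
    prob_congr' μ fun ω => by simp [Prod.ext_iff, and_comm]
  have hz : ∀ b, prob μ (fun ω => z ω = b) = u b + v b := fun b =>
    prob_split_bool' μ S _
  have hkey : ∑ b, (negMulLog (u b) + negMulLog (v b) - negMulLog (u b + v b)) = 0 := by
    have heq : condEnt μ S z
        = ∑ b, (negMulLog (u b) + negMulLog (v b) - negMulLog (u b + v b)) := by
      unfold condEnt ent
      rw [Fintype.sum_prod_type, Fintype.sum_bool]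
      simp only [hT, hF, hz]
      rw [Finset.sum_sub_distrib, Finset.sum_add_distrib]
    rw [← heq, hdet]
  have hnn : ∀ b ∈ Finset.univ,
      0 ≤ negMulLog (u b) + negMulLog (v b) - negMulLog (u b + v b) := by
    intro b _
    have := negMulLog_add_le' (prob_nonneg' μ hμ.1 _ : 0 ≤ u b)
      (prob_nonneg' μ hμ.1 _ : 0 ≤ v b)
    linarith
  have hall := (Finset.sum_eq_zero_iff_of_nonneg hnn).1 hkey
  by_contra hcon
  push_neg at hcon
  have hub : 0 < u b := (prob_nonneg' μ hμ.1 _).lt_of_ne (Ne.symm hcon.1)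
  have hvb : 0 < v b := (prob_nonneg' μ hμ.1 _).lt_of_ne (Ne.symm hcon.2)
  have := negMulLog_add_lt' hub hvb
  have h0 := hall b (Finset.mem_univ b)
  linarith

/-- Entropy decomposition along a binary gate, when the gate value is
determined by `X`. -/
lemma ent_split' {C : Type*} [Fintype C] (μ : Ω → ℝ) (hμ : IsPMF μ) (S : Ω → Bool)
    (X : Ω → C)
    (hp : 0 < prob μ (fun ω => S ω = true)) (hq : 0 < prob μ (fun ω => S ω = false))
    (hsplit : ∀ c, prob μ (fun ω => X ω = c ∧ S ω = true) = 0
      ∨ prob μ (fun ω => X ω = c ∧ S ω = false) = 0) :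
    ent μ X
      = prob μ (fun ω => S ω = true) * ent (condMeas μ (fun ω => S ω = true)) X
        + prob μ (fun ω => S ω = false) * ent (condMeas μ (fun ω => S ω = false)) X
        + negMulLog (prob μ (fun ω => S ω = true))
        + negMulLog (prob μ (fun ω => S ω = false)) := by
  set p := prob μ (fun ω => S ω = true) with hpdef
  set q := prob μ (fun ω => S ω = false) with hqdef
  set a : C → ℝ := fun c => prob (condMeas μ (fun ω => S ω = true)) (fun ω => X ω = c)
    with hadef
  set b : C → ℝ := fun c => prob (condMeas μ (fun ω => S ω = false)) (fun ω => X ω = c)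
    with hbdef
  have hua : ∀ c, prob μ (fun ω => X ω = c ∧ S ω = true) = p * a c := by
    intro c
    rw [hadef]
    simp only [prob_condMeas']
    field_simp
    exact (mul_div_cancel_right₀ _ hp.ne').symm
  have hvb : ∀ c, prob μ (fun ω => X ω = c ∧ S ω = false) = q * b c := by
    intro c
    rw [hbdef]
    simp only [prob_condMeas']
    field_simp
    exact (mul_div_cancel_right₀ _ hq.ne').symm
  have hterm : ∀ c, negMulLog (prob μ (fun ω => X ω = c))
      = (p * negMulLog (a c) + a c * negMulLog p)
        + (q * negMulLog (b c) + b c * negMulLog q) := by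
    intro c
    rw [prob_split_bool' μ S (fun ω => X ω = c), hua c, hvb c]
    rcases hsplit c with h | h
    · have ha0 : a c = 0 := by
        have := hua c; rw [h] at this
        exact (mul_eq_zero.1 this.symm).resolve_left hp.ne'
      simp only [ha0, negMulLog_mul, negMulLog_zero, mul_zero, zero_mul, add_zero, zero_add]
      ring
    · have hb0 : b c = 0 := by
        have := hvb c; rw [h] at this
        exact (mul_eq_zero.1 this.symm).resolve_left hq.ne'
      simp only [hb0, negMulLog_mul, negMulLog_zero, mul_zero, zero_mul, add_zero, zero_add]
      ring
  have hsa : ∑ c, a c = 1 := by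
    rw [hadef]
    simp only
    rw [sum_prob', sum_condMeas' μ _ hp.ne']
  have hsb : ∑ c, b c = 1 := by
    rw [hbdef]
    simp only
    rw [sum_prob', sum_condMeas' μ _ hq.ne']
  unfold ent
  simp only [hterm]
  rw [Finset.sum_add_distrib, Finset.sum_add_distrib, Finset.sum_add_distrib,
    ← Finset.mul_sum, ← Finset.mul_sum, ← Finset.sum_mul, ← Finset.sum_mul,
    hsa, hsb]
  ring

/-- Entropy of an independent pair is the sum of the entropies. -/
lemma ent_pair_of_indep' {A B : Type*} [Fintype A] [Fintype B] (ν : Ω → ℝ)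
    (y : Ω → A) (z : Ω → B)
    (hsy : ∑ a, prob ν (fun ω => y ω = a) = 1)
    (hsz : ∑ b, prob ν (fun ω => z ω = b) = 1)
    (hind : ∀ a b, prob ν (fun ω => y ω = a ∧ z ω = b)
      = prob ν (fun ω => y ω = a) * prob ν (fun ω => z ω = b)) :
    ent ν (fun ω => (y ω, z ω)) = ent ν y + ent ν z := by
  unfold ent
  rw [Fintype.sum_prod_type]
  have hpair : ∀ (a : A) (b : B), prob ν (fun ω => (y ω, z ω) = (a, b))
      = prob ν (fun ω => y ω = a) * prob ν (fun ω => z ω = b) := by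
    intro a b
    rw [← hind]
    exact prob_congr' ν fun ω => by simp [Prod.ext_iff]
  simp only [hpair, negMulLog_mul]
  have hrow : ∀ a : A, ∑ b, (prob ν (fun ω => z ω = b) * negMulLog (prob ν fun ω => y ω = a)
      + prob ν (fun ω => y ω = a) * negMulLog (prob ν fun ω => z ω = b))
      = negMulLog (prob ν fun ω => y ω = a)
        + prob ν (fun ω => y ω = a) * ∑ b, negMulLog (prob ν fun ω => z ω = b) := by
    intro a
    rw [Finset.sum_add_distrib, ← Finset.sum_mul, hsz, one_mul, ← Finset.mul_sum]
  simp only [hrow]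
  rw [Finset.sum_add_distrib, ← Finset.sum_mul, hsy, one_mul]

/-- Gated observation model: if `y ⟂ S`, `y ⟂ z` given `S = 0`, and `z` determines `S`
(`H(S|z) = 0`), then `I(y ; z) = P(S=1) · (H(y) - H(y | z, S=1))`; with an ideal observer
(`H(y | z, S=1) = 0`) this gives `I(y ; z) = H(y) · P(S=1)`. -/
theorem gated_information_gain {A B : Type*} [Fintype A] [Fintype B]
    (μ : Ω → ℝ) (hμ : IsPMF μ) (y : Ω → A) (z : Ω → B) (S : Ω → Bool)
    (h1 : 0 < prob μ (fun ω => S ω = true))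
    (h1' : prob μ (fun ω => S ω = true) < 1)
    (hyS : ∀ (a : A) (s : Bool),
      prob μ (fun ω => y ω = a ∧ S ω = s)
        = prob μ (fun ω => y ω = a) * prob μ (fun ω => S ω = s))
    (hyz0 : ∀ (a : A) (b : B),
      prob (condMeas μ (fun ω => S ω = false)) (fun ω => y ω = a ∧ z ω = b)
        = prob (condMeas μ (fun ω => S ω = false)) (fun ω => y ω = a)
          * prob (condMeas μ (fun ω => S ω = false)) (fun ω => z ω = b))
    (hdet : condEnt μ S z = 0) :
    mutInfo μ y z
      = prob μ (fun ω => S ω = true)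
        * (ent μ y - condEnt (condMeas μ (fun ω => S ω = true)) y z) ∧
      (condEnt (condMeas μ (fun ω => S ω = true)) y z = 0 →
        mutInfo μ y z = ent μ y * prob μ (fun ω => S ω = true)) := by
  set p := prob μ (fun ω => S ω = true) with hpdef
  set q := prob μ (fun ω => S ω = false) with hqdef
  -- p + q = 1
  have hpq : p + q = 1 := by
    rw [hpdef, hqdef]
    unfold prob
    rw [← Finset.sum_add_distrib, ← hμ.2]
    apply Finset.sum_congr rfl
    intro ω _
    cases h : S ω <;> simp [h]
  have hq : 0 < q := by linarith
  -- zero-probability transfer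
  have hzero : ∀ {E F : Ω → Prop}, (∀ ω, F ω → E ω) → prob μ E = 0 → prob μ F = 0 := by
    intro E F h hE
    exact le_antisymm (hE ▸ prob_mono' μ hμ.1 h) (prob_nonneg' μ hμ.1 _)
  -- determinism of S from z
  have hdetb := det_of_condEnt_zero' μ hμ S z hdet
  have hsplit_z : ∀ b, prob μ (fun ω => z ω = b ∧ S ω = true) = 0
      ∨ prob μ (fun ω => z ω = b ∧ S ω = false) = 0 := hdetb
  have hsplit_pair : ∀ c : A × B,
      prob μ (fun ω => (y ω, z ω) = c ∧ S ω = true) = 0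
        ∨ prob μ (fun ω => (y ω, z ω) = c ∧ S ω = false) = 0 := by
    intro c
    rcases hdetb c.2 with h | h
    · exact Or.inl (hzero (fun ω hω => by
        obtain ⟨h1, h2⟩ := hω
        exact ⟨by rw [← h1], h2⟩) h)
    · exact Or.inr (hzero (fun ω hω => by
        obtain ⟨h1, h2⟩ := hω
        exact ⟨by rw [← h1], h2⟩) h)
  set μ1 := condMeas μ (fun ω => S ω = true) with hμ1
  set μ0 := condMeas μ (fun ω => S ω = false) with hμ0
  -- conditional entropy decomposition
  have hcz : condEnt μ y z = p * condEnt μ1 y z + q * condEnt μ0 y z := by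
    unfold condEnt
    rw [ent_split' μ hμ S (fun ω => (y ω, z ω)) h1 hq hsplit_pair,
      ent_split' μ hμ S z h1 hq hsplit_z]
    ring
  -- marginal sums under the conditional measures
  have hsy0 : ∑ a, prob μ0 (fun ω => y ω = a) = 1 := by
    rw [hμ0, sum_prob', sum_condMeas' μ _ hq.ne']
  have hsz0 : ∑ b, prob μ0 (fun ω => z ω = b) = 1 := by
    rw [hμ0, sum_prob', sum_condMeas' μ _ hq.ne']
  -- conditional independence given S = 0
  have h0 : condEnt μ0 y z = ent μ0 y := by
    unfold condEnt
    rw [ent_pair_of_indep' μ0 y z hsy0 hsz0 hyz0]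
    ring
  -- y ⟂ S : the conditional marginal of y given S = 0 is the marginal of y
  have hmarg : ∀ a, prob μ0 (fun ω => y ω = a) = prob μ (fun ω => y ω = a) := by
    intro a
    rw [hμ0, prob_condMeas', hyS a false, ← hqdef, mul_div_assoc, div_self hq.ne',
      mul_one]
  have hey : ent μ0 y = ent μ y := by
    unfold ent
    simp only [hmarg]
  -- main identity
  have key : mutInfo μ y z = p * (ent μ y - condEnt μ1 y z) := by
    unfold mutInfo
    rw [hcz, h0, hey]
    have : q = 1 - p := by linarith
    rw [this]
    ring
  exact ⟨key, fun hid => by rw [key, hid]; ring⟩
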